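/- Let F(σ, n) = h(n)² · |g(σ)| · (1 + (μ/(√|G(σ)|·n))²) be a positive C² function of (σ, n) ∈ I × ℝ_{>0}, where h, g, G are positive C² functions and μ a constant, and define v² by (1−v²)^{−1} = 1 + (μ/(√|G|·n))² and v_s² = d ln h / d ln n. Then ∂F/∂n = 2 F n^{−1} (v_s² − v²). -/

import Mathlib

/-- The `n`-gradient of the accretion Hamiltonian
`F(σ,n) = h(n)² |g(σ)| (1 + (μ/(√|G(σ)| n))²)` is
`∂F/∂n = 2 F n⁻¹ (v_s² - v²)`, identifying the `σ`-nullcline with the sonic locus. -/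
theorem hamiltonian_n_gradient
    (h g G : ℝ → ℝ) (μ : ℝ)
    (hh : ContDiff ℝ 2 h) (hg : ContDiff ℝ 2 g) (hG : ContDiff ℝ 2 G)
    (hhpos : ∀ n, 0 < h n) (hgpos : ∀ σ, 0 < g σ) (hGpos : ∀ σ, 0 < G σ)
    (F : ℝ → ℝ → ℝ)
    (hF : ∀ σ n, F σ n = (h n) ^ 2 * |g σ| * (1 + (μ / (Real.sqrt |G σ| * n)) ^ 2))
    (vs2 : ℝ → ℝ) (hvs2 : ∀ n, vs2 n = n * deriv h n / h n)
    (v2 : ℝ → ℝ → ℝ)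
    (hv2 : ∀ σ n, (1 - v2 σ n)⁻¹ = 1 + (μ / (Real.sqrt |G σ| * n)) ^ 2) :
    ∀ σ : ℝ, ∀ n : ℝ, 0 < n →
      deriv (fun m => F σ m) n = 2 * F σ n * n⁻¹ * (vs2 n - v2 σ n) := by
  intro σ n hn
  set s := Real.sqrt |G σ| with hs_def
  have hspos : (0:ℝ) < s := Real.sqrt_pos.2 (abs_pos.2 (ne_of_gt (hGpos σ)))
  have hs0 : s ≠ 0 := ne_of_gt hspos
  have hn0 : n ≠ 0 := ne_of_gt hn
  have hhn0 : h n ≠ 0 := ne_of_gt (hhpos n)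
  have hK : (0:ℝ) < 1 + (μ / (s * n)) ^ 2 := by positivity
  have hv : v2 σ n = 1 - (1 + (μ / (s * n)) ^ 2)⁻¹ := by
    have h1 : 1 - v2 σ n = (1 + (μ / (s * n)) ^ 2)⁻¹ := by
      rw [← hv2 σ n, inv_inv]
    linarith
  have hFn : (fun m => F σ m) = fun m => (h m) ^ 2 * |g σ| * (1 + μ ^ 2 * ((s * m) ^ 2)⁻¹) := by
    funext m
    rw [hF σ m, div_pow, div_eq_mul_inv]
  have hder_h : HasDerivAt h (deriv h n) n :=
    ((hh.differentiable (by norm_num)) n).hasDerivAt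
  have h1 : HasDerivAt (fun m : ℝ => s * m) (s * 1) n := (hasDerivAt_id n).const_mul s
  have h2 : HasDerivAt (fun m : ℝ => (s * m) ^ 2) (2 * (s * n) ^ 1 * (s * 1)) n := h1.pow 2
  have hsn0 : (s * n) ^ 2 ≠ 0 := by positivity
  have h3 : HasDerivAt (fun m : ℝ => ((s * m) ^ 2)⁻¹)
      (-(2 * (s * n) ^ 1 * (s * 1)) / ((s * n) ^ 2) ^ 2) n := h2.inv hsn0
  have h4 : HasDerivAt (fun m : ℝ => 1 + μ ^ 2 * ((s * m) ^ 2)⁻¹)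
      (μ ^ 2 * (-(2 * (s * n) ^ 1 * (s * 1)) / ((s * n) ^ 2) ^ 2)) n :=
    (h3.const_mul (μ ^ 2)).const_add 1
  have h5 : HasDerivAt (fun m : ℝ => (h m) ^ 2 * |g σ|)
      (2 * h n ^ 1 * deriv h n * |g σ|) n := (hder_h.pow 2).mul_const _
  have h6 : HasDerivAt (fun m => F σ m)
      ((2 * h n ^ 1 * deriv h n * |g σ|) * (1 + μ ^ 2 * ((s * n) ^ 2)⁻¹)
        + ((h n) ^ 2 * |g σ|) * (μ ^ 2 * (-(2 * (s * n) ^ 1 * (s * 1)) / ((s * n) ^ 2) ^ 2))) n := by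
    rw [hFn]; exact h5.mul h4
  rw [h6.deriv, hF σ n, hvs2 n, hv, ← hs_def]
  have hK0 : 1 + (μ / (s * n)) ^ 2 ≠ 0 := ne_of_gt hK
  field_simp
  ring
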